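/- Suppose F = f + Ψ where f : ℝⁿ → ℝ is convex and L-smooth (L > 0) and Ψ : ℝⁿ → ℝ ∪ {+∞} is proper, closed and convex. Then for all x, y ∈ ℝⁿ, F(x̄) ≤ F(y) + ⟨G_{1/L}(x), x − y⟩ − (1/(2L))‖G_{1/L}(x)‖², where x̄ = x − G_{1/L}(x)/L. Moreover, without the convexity assumption on f (f only L-smooth), the inequality F(x̄) ≤ F(x) − (1/(2L))‖G_{1/L}(x)‖² still holds for all x. -/

import Mathlib

open scoped RealInnerProductSpace

lemma aux_eps_le (A B : ℝ) (hB : 0 ≤ B) (h : ∀ s : ℝ, 0 < s → s ≤ 1 → A ≤ s * B) : A ≤ 0 := by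
  rcases hB.eq_or_lt with hB0 | hB0
  · have := h 1 one_pos le_rfl; simpa [← hB0] using this
  · by_contra hA
    push_neg at hA
    have hs1 : 0 < min 1 (A / (2 * B)) := lt_min one_pos (by positivity)
    have := h _ hs1 (min_le_left _ _)
    have h2 : min 1 (A / (2 * B)) * B ≤ (A / (2 * B)) * B :=
      mul_le_mul_of_nonneg_right (min_le_right _ _) hB
    have h3 : (A / (2 * B)) * B = A / 2 := by field_simp
    linarith

lemma inner_expand {E : Type*} [NormedAddCommGroup E] [InnerProductSpace ℝ E]
    (c : ℝ) (d v w : E) :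
    ⟪d - c • v, d - w⟫ = ‖d‖ ^ 2 - ⟪d, w⟫ - c * ⟪v, d⟫ + c * ⟪v, w⟫ := by
  simp only [inner_sub_left, inner_sub_right, real_inner_smul_left]
  rw [real_inner_self_eq_norm_sq]
  ring

lemma inner_expand2 {E : Type*} [NormedAddCommGroup E] [InnerProductSpace ℝ E]
    (c : ℝ) (d v : E) :
    ⟪d - c • v, d⟫ = ‖d‖ ^ 2 - c * ⟪v, d⟫ := by
  simp only [inner_sub_left, real_inner_smul_left]
  rw [real_inner_self_eq_norm_sq]

set_option maxHeartbeats 1000000 in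
/-- descent-type inequalities for the prox-gradient step.
The first inequality requires convexity of `f`; the final inequality
(`y = x` case) holds without convexity. -/
theorem prox_gradient_descent_inequalities {n : ℕ} (L : ℝ) (hL : 0 < L)
    (f : EuclideanSpace ℝ (Fin n) → ℝ)
    (f' : EuclideanSpace ℝ (Fin n) → EuclideanSpace ℝ (Fin n))
    (hdiff : ∀ x, HasGradientAt f (f' x) x)
    (hsmooth : ∀ x y : EuclideanSpace ℝ (Fin n),
      |f x - f y - ⟪f' y, x - y⟫| ≤ L / 2 * ‖x - y‖ ^ 2)
    (Ψ : EuclideanSpace ℝ (Fin n) → EReal)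
    (hproper : (∀ x, Ψ x ≠ ⊥) ∧ (∃ x, Ψ x ≠ ⊤))
    (hclosed : LowerSemicontinuous Ψ)
    (hconvex : ∀ x y : EuclideanSpace ℝ (Fin n), ∀ a b : ℝ, 0 ≤ a → 0 ≤ b → a + b = 1 →
      Ψ (a • x + b • y) ≤ (a : EReal) * Ψ x + (b : EReal) * Ψ y)
    (prox : ℝ → EuclideanSpace ℝ (Fin n) → EuclideanSpace ℝ (Fin n))
    (hprox : ∀ t : ℝ, 0 < t → ∀ x z : EuclideanSpace ℝ (Fin n),
      Ψ (prox t x) + ((‖x - prox t x‖ ^ 2 / (2 * t) : ℝ) : EReal)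
        ≤ Ψ z + ((‖x - z‖ ^ 2 / (2 * t) : ℝ) : EReal))
    (F : EuclideanSpace ℝ (Fin n) → EReal)
    (hF : ∀ x, F x = (f x : EReal) + Ψ x)
    (G : ℝ → EuclideanSpace ℝ (Fin n) → EuclideanSpace ℝ (Fin n))
    (hG : ∀ t x, G t x = t⁻¹ • (x - prox t (x - t • f' x))) :
    (ConvexOn ℝ Set.univ f →
      ∀ x y : EuclideanSpace ℝ (Fin n),
        F (x - (1 / L) • G (1 / L) x)
          ≤ F y + ((⟪G (1 / L) x, x - y⟫ - 1 / (2 * L) * ‖G (1 / L) x‖ ^ 2 : ℝ) : EReal)) ∧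
    (∀ x : EuclideanSpace ℝ (Fin n),
      F (x - (1 / L) • G (1 / L) x)
        ≤ F x - ((1 / (2 * L) * ‖G (1 / L) x‖ ^ 2 : ℝ) : EReal)) := by
  have hL0 : L ≠ 0 := ne_of_gt hL
  have ht : (0:ℝ) < 1 / L := by positivity
  obtain ⟨hne_bot, z₀, hz₀⟩ := hproper
  obtain ⟨ψ₀, hψ₀⟩ : ∃ r : ℝ, Ψ z₀ = r := ⟨_, (EReal.coe_toReal hz₀ (hne_bot z₀)).symm⟩
  -- main per-point setup
  have main : ∀ x : EuclideanSpace ℝ (Fin n),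
      ∃ (p : EuclideanSpace ℝ (Fin n)) (ψp : ℝ),
        x - (1 / L) • G (1 / L) x = p ∧
        G (1 / L) x = L • (x - p) ∧
        Ψ p = (ψp : EReal) ∧
        f p ≤ f x - ⟪f' x, x - p⟫ + L / 2 * ‖x - p‖ ^ 2 ∧
        (∀ z : EuclideanSpace ℝ (Fin n), ∀ ψz : ℝ, Ψ z = (ψz : EReal) →
          ψp + L * ⟪(x - (1 / L) • f' x) - p, z - p⟫ ≤ ψz) := by
    intro x
    set u : EuclideanSpace ℝ (Fin n) := x - (1 / L) • f' x with hu
    set p : EuclideanSpace ℝ (Fin n) := prox (1 / L) u with hp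
    have hGx : G (1 / L) x = L • (x - p) := by
      rw [hG]; congr 1 <;> simp [hu, hp, one_div]
    have hxbar : x - (1 / L) • G (1 / L) x = p := by
      rw [hGx, smul_smul]
      rw [show (1 / L) * L = 1 from by field_simp]
      module
    -- Ψ p is real
    have hΨp_ne_top : Ψ p ≠ ⊤ := by
      intro htop
      have h1 := hprox (1 / L) ht u z₀
      rw [hp] at htop
      rw [htop, hψ₀, EReal.top_add_coe] at h1
      have h2 := top_le_iff.mp h1
      rw [← EReal.coe_add] at h2
      exact EReal.coe_ne_top _ h2
    obtain ⟨ψp, hψp⟩ : ∃ r : ℝ, Ψ p = r := ⟨_, (EReal.coe_toReal hΨp_ne_top (hne_bot p)).symm⟩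
    refine ⟨p, ψp, hxbar, hGx, hψp, ?_, ?_⟩
    · -- smoothness descent
      have h1 := (abs_le.mp (hsmooth p x)).2
      have e1 : ⟪f' x, p - x⟫ = -⟪f' x, x - p⟫ := by
        rw [inner_sub_right, inner_sub_right]; ring
      have e2 : ‖p - x‖ = ‖x - p‖ := norm_sub_rev _ _
      rw [e1, e2] at h1; linarith
    · -- subgradient inequality for Ψ at p
      intro z ψz hψz
      have key : ψp + L * ⟪u - p, z - p⟫ - ψz ≤ 0 := by
        apply aux_eps_le _ (L / 2 * ‖z - p‖ ^ 2) (by positivity)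
        intro s hs hs1
        set w : EuclideanSpace ℝ (Fin n) := (1 - s) • p + s • z with hw
        have hcv := hconvex p z (1 - s) s (by linarith) hs.le (by ring)
        rw [hψp, hψz, ← EReal.coe_mul, ← EReal.coe_mul, ← EReal.coe_add] at hcv
        have hΨw_ne_top : Ψ w ≠ ⊤ := ne_top_of_le_ne_top (EReal.coe_ne_top _) hcv
        obtain ⟨ψw, hψw⟩ : ∃ r : ℝ, Ψ w = r := ⟨_, (EReal.coe_toReal hΨw_ne_top (hne_bot w)).symm⟩
        rw [hψw] at hcv
        have hcvr : ψw ≤ (1 - s) * ψp + s * ψz := EReal.coe_le_coe_iff.mp hcv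
        have hpx := hprox (1 / L) ht u w
        rw [← hp, hψp, hψw, ← EReal.coe_add, ← EReal.coe_add] at hpx
        have hpxr : ψp + ‖u - p‖ ^ 2 / (2 * (1 / L))
            ≤ ψw + ‖u - w‖ ^ 2 / (2 * (1 / L)) := EReal.coe_le_coe_iff.mp hpx
        have huw : u - w = (u - p) - s • (z - p) := by
          rw [hw]; module
        have hnorm : ‖u - w‖ ^ 2
            = ‖u - p‖ ^ 2 - 2 * (s * ⟪u - p, z - p⟫) + s ^ 2 * ‖z - p‖ ^ 2 := by
          rw [huw, @norm_sub_sq_real, real_inner_smul_right, norm_smul,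
            Real.norm_eq_abs, mul_pow, sq_abs]
        have hdiv : ∀ a : ℝ, a / (2 * (1 / L)) = a * (L / 2) := by
          intro a; first
          | (field_simp; ring)
          | field_simp
        rw [hnorm, hdiv, hdiv] at hpxr
        have h4 : s * (ψp + L * ⟪u - p, z - p⟫ - ψz)
            ≤ s * (s * (L / 2 * ‖z - p‖ ^ 2)) := by nlinarith [hpxr, hcvr]
        have := (mul_le_mul_iff_right₀ hs).mp h4
        linarith
      linarith
  constructor
  · -- convex case
    intro hc x y
    -- first-order condition from convexity + smoothness
    have hfo : f x - f y ≤ ⟪f' x, x - y⟫ := by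
      have key : f x - f y - ⟪f' x, x - y⟫ ≤ 0 := by
        apply aux_eps_le _ (L / 2 * ‖y - x‖ ^ 2) (by positivity)
        intro s hs hs1
        set z : EuclideanSpace ℝ (Fin n) := (1 - s) • x + s • y with hz
        have hcv : f ((1 - s) • x + s • y) ≤ (1 - s) * f x + s * f y := by
          have := hc.2 (Set.mem_univ x) (Set.mem_univ y)
            (show (0:ℝ) ≤ 1 - s by linarith) hs.le (show (1 - s) + s = 1 by ring)
          simpa using this
        rw [← hz] at hcv
        have hsm := (abs_le.mp (hsmooth z x)).1
        have hzx : z - x = s • (y - x) := by rw [hz]; module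
        have e1 : ⟪f' x, z - x⟫ = s * ⟪f' x, y - x⟫ := by
          rw [hzx, real_inner_smul_right]
        have e2 : ‖z - x‖ ^ 2 = s ^ 2 * ‖y - x‖ ^ 2 := by
          rw [hzx, norm_smul, Real.norm_eq_abs, mul_pow, sq_abs]
        have e3 : ⟪f' x, y - x⟫ = -⟪f' x, x - y⟫ := by
          rw [inner_sub_right, inner_sub_right]; ring
        rw [e1, e2, e3] at hsm
        have h4 : s * (f x - f y - ⟪f' x, x - y⟫)
            ≤ s * (s * (L / 2 * ‖y - x‖ ^ 2)) := by nlinarith [hsm, hcv]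
        have := (mul_le_mul_iff_right₀ hs).mp h4
        linarith
      linarith
    obtain ⟨p, ψp, hxbar, hGx, hψp, hsm, hsubg⟩ := main x
    by_cases hy : Ψ y = ⊤
    · rw [hF y, hy, EReal.add_top_of_ne_bot (EReal.coe_ne_bot (f y)), EReal.top_add_coe]
      exact le_top
    · obtain ⟨ψy, hψy⟩ : ∃ r : ℝ, Ψ y = r := ⟨_, (EReal.coe_toReal hy (hne_bot y)).symm⟩
      have hsg := hsubg y ψy hψy
      have harg1 : (x - (1 / L) • f' x) - p = (x - p) - (1 / L) • f' x := by module
      have harg2 : (y : EuclideanSpace ℝ (Fin n)) - p = (x - p) - (x - y) := by module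
      rw [harg1, harg2, inner_expand] at hsg
      have e1 : ⟪G (1 / L) x, x - y⟫ = L * ⟪x - p, x - y⟫ := by
        rw [hGx, real_inner_smul_left]
      have e2 : ‖G (1 / L) x‖ ^ 2 = L ^ 2 * ‖x - p‖ ^ 2 := by
        rw [hGx, norm_smul, Real.norm_eq_abs, mul_pow, sq_abs]
      have hcancel : L * ((1 / L) * ⟪f' x, x - p⟫) = ⟪f' x, x - p⟫ := by field_simp
      have hcancel2 : L * ((1 / L) * ⟪f' x, x - y⟫) = ⟪f' x, x - y⟫ := by field_simp
      have hhalf : 1 / (2 * L) * (L ^ 2 * ‖x - p‖ ^ 2) = L / 2 * ‖x - p‖ ^ 2 := by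
        field_simp
      rw [hF, hF, hxbar, hψp, hψy, e1, e2, ← EReal.coe_add, ← EReal.coe_add, ← EReal.coe_add]
      rw [EReal.coe_le_coe_iff]
      nlinarith [hsg, hfo, hsm]
  · -- nonconvex case
    intro x
    obtain ⟨p, ψp, hxbar, hGx, hψp, hsm, hsubg⟩ := main x
    by_cases hx : Ψ x = ⊤
    · rw [hF x, hx, EReal.add_top_of_ne_bot (EReal.coe_ne_bot (f x)), EReal.top_sub_coe]
      exact le_top
    · obtain ⟨ψx, hψx⟩ : ∃ r : ℝ, Ψ x = r := ⟨_, (EReal.coe_toReal hx (hne_bot x)).symm⟩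
      have hsg := hsubg x ψx hψx
      have harg1 : (x - (1 / L) • f' x) - p = (x - p) - (1 / L) • f' x := by module
      rw [harg1, inner_expand2] at hsg
      have e2 : ‖G (1 / L) x‖ ^ 2 = L ^ 2 * ‖x - p‖ ^ 2 := by
        rw [hGx, norm_smul, Real.norm_eq_abs, mul_pow, sq_abs]
      have hcancel : L * ((1 / L) * ⟪f' x, x - p⟫) = ⟪f' x, x - p⟫ := by field_simp
      have hhalf : 1 / (2 * L) * (L ^ 2 * ‖x - p‖ ^ 2) = L / 2 * ‖x - p‖ ^ 2 := by
        field_simp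
      rw [hF, hF, hxbar, hψp, hψx, e2, ← EReal.coe_add, ← EReal.coe_add, ← EReal.coe_sub]
      rw [EReal.coe_le_coe_iff]
      nlinarith [hsg, hsm]
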